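/- Every semiregular topological monoid with open shifts is completely regular. That is, if S is a topological monoid with open shifts and for every point x ∈ S and every neighborhood O of x there is a neighborhood U of x with interior(closure(U)) ⊆ O, then S is completely regular. -/

import Mathlib

open Topology Set Pointwise

namespace SemiregMonoidCR

/-! ### Dyadic rationals indexed by finite sets of positions -/

/-- The dyadic rational `∑_{i∈F} 2^{-i}`. -/
noncomputable def qF (F : Finset ℕ) : ℝ := ∑ i ∈ F, (2 : ℝ)⁻¹ ^ i

lemma qF_nonneg (F : Finset ℕ) : 0 ≤ qF F :=
  Finset.sum_nonneg fun i _ => by positivity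

lemma qF_pos {F : Finset ℕ} (h : F.Nonempty) : 0 < qF F :=
  Finset.sum_pos (fun i _ => by positivity) h

lemma qF_erase {F : Finset ℕ} {a : ℕ} (ha : a ∈ F) :
    qF F = (2 : ℝ)⁻¹ ^ a + qF (F.erase a) :=
  (Finset.add_sum_erase F _ ha).symm

lemma le_qF {F : Finset ℕ} {a : ℕ} (ha : a ∈ F) : (2 : ℝ)⁻¹ ^ a ≤ qF F :=
  Finset.single_le_sum (fun i _ => by positivity) ha

lemma qF_lt {F : Finset ℕ} (h : F.Nonempty) :
    qF F < 2 * (2 : ℝ)⁻¹ ^ (F.min' h) := by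
  induction F using Finset.strongInduction with
  | _ F ih =>
    set a := F.min' h with hadef
    rw [qF_erase (F.min'_mem h)]
    rcases (F.erase a).eq_empty_or_nonempty with he | he
    · rw [he]
      simp only [qF, Finset.sum_empty, add_zero]
      have : (0:ℝ) < (2:ℝ)⁻¹ ^ a := by positivity
      linarith
    · have hb : a + 1 ≤ (F.erase a).min' he := by
        have hmem := Finset.min'_mem (F.erase a) he
        have h1' : a ≤ (F.erase a).min' he := F.min'_le _ (Finset.mem_of_mem_erase hmem)
        have h2' : (F.erase a).min' he ≠ a := Finset.ne_of_mem_erase hmem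
        omega
      have h1 := ih _ (Finset.erase_ssubset (F.min'_mem h)) he
      have h2 : 2 * (2:ℝ)⁻¹ ^ ((F.erase a).min' he) ≤ 2 * (2:ℝ)⁻¹ ^ (a+1) := by
        have := pow_le_pow_of_le_one (by norm_num : (0:ℝ) ≤ 2⁻¹)
          (by norm_num : (2:ℝ)⁻¹ ≤ 1) hb
        linarith
      have h3 : (2:ℝ) * (2:ℝ)⁻¹ ^ (a+1) = (2:ℝ)⁻¹ ^ a := by
        rw [pow_succ]; ring
      linarith

lemma min_le_of_qF_le {F G : Finset ℕ} (hF : F.Nonempty) (hG : G.Nonempty)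
    (h : qF F ≤ qF G) : G.min' hG ≤ F.min' hF := by
  by_contra hc
  push_neg at hc
  have h1 : (2:ℝ)⁻¹ ^ (F.min' hF) ≤ qF F := le_qF (F.min'_mem hF)
  have h2 : qF G < 2 * (2:ℝ)⁻¹ ^ (G.min' hG) := qF_lt hG
  have h3 : 2 * (2:ℝ)⁻¹ ^ (G.min' hG) ≤ 2 * (2:ℝ)⁻¹ ^ (F.min' hF + 1) := by
    have := pow_le_pow_of_le_one (by norm_num : (0:ℝ) ≤ 2⁻¹)
      (by norm_num : (2:ℝ)⁻¹ ≤ 1) (by omega : F.min' hF + 1 ≤ G.min' hG)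
    linarith
  have h4 : (2:ℝ) * (2:ℝ)⁻¹ ^ (F.min' hF + 1) = (2:ℝ)⁻¹ ^ (F.min' hF) := by
    rw [pow_succ]; ring
  linarith

lemma qF_insert {F : Finset ℕ} {n : ℕ} (hn : n ∉ F) :
    qF (insert n F) = (2:ℝ)⁻¹ ^ n + qF F := Finset.sum_insert hn

/-! ### Ordered products of sets -/

variable {S : Type*} [Monoid S]

/-- Ordered product of the sets `U i`, `i ∈ F`, in increasing order of indices. -/
noncomputable def setProd (U : ℕ → Set S) (F : Finset ℕ) : Set S :=
  if h : F.Nonempty then U (F.min' h) * setProd U (F.erase (F.min' h)) else 1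
termination_by F.card
decreasing_by exact Finset.card_erase_lt_of_mem (F.min'_mem h)

lemma setProd_empty (U : ℕ → Set S) : setProd U (∅ : Finset ℕ) = 1 := by
  rw [setProd]; simp

lemma setProd_nonempty (U : ℕ → Set S) {F : Finset ℕ} (h : F.Nonempty) :
    setProd U F = U (F.min' h) * setProd U (F.erase (F.min' h)) := by
  rw [setProd]; simp [h]

lemma one_mem_setProd (U : ℕ → Set S) (hone : ∀ n, (1 : S) ∈ U n) (F : Finset ℕ) :
    (1 : S) ∈ setProd U F := by
  induction F using Finset.strongInduction with
  | _ F ih =>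
    rcases F.eq_empty_or_nonempty with rfl | h
    · rw [setProd_empty]; exact Set.mem_one.2 rfl
    · rw [setProd_nonempty U h]
      exact ⟨1, hone _, 1, ih _ (Finset.erase_ssubset (F.min'_mem h)), one_mul 1⟩

lemma one_subset_setProd (U : ℕ → Set S) (hone : ∀ n, (1 : S) ∈ U n) (F : Finset ℕ) :
    (1 : Set S) ⊆ setProd U F := fun z hz => by
  rw [Set.mem_one] at hz; subst hz; exact one_mem_setProd U hone F

variable {U : ℕ → Set S} (hone : ∀ n, (1 : S) ∈ U n)
  (hchain : ∀ n, U (n + 1) * U (n + 1) ⊆ U n)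

include hone hchain

lemma U_succ_subset : ∀ n, U (n + 1) ⊆ U n := fun n u hu =>
  hchain n ⟨u, hu, 1, hone _, mul_one u⟩

lemma U_antitone : ∀ {n m}, n ≤ m → U m ⊆ U n := by
  intro n m h
  induction h with
  | refl => exact Subset.rfl
  | step h ih => exact (U_succ_subset hone hchain _).trans ih

lemma setProd_subset_U {F : Finset ℕ} (h : F.Nonempty) (h1 : ∀ i ∈ F, 1 ≤ i) :
    setProd U F ⊆ U (F.min' h - 1) := by
  induction F using Finset.strongInduction with
  | _ F ih =>
    rw [setProd_nonempty U h]
    set a := F.min' h with ha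
    rcases (F.erase a).eq_empty_or_nonempty with he | he
    · rw [he, setProd_empty, mul_one]
      exact U_antitone hone hchain (Nat.sub_le a 1)
    · have hsub : (F.erase a) ⊂ F := Finset.erase_ssubset (F.min'_mem h)
      have hb : a + 1 ≤ (F.erase a).min' he := by
        have hmem : (F.erase a).min' he ∈ F.erase a := Finset.min'_mem _ _
        have h1' : a ≤ (F.erase a).min' he :=
          F.min'_le _ (Finset.mem_of_mem_erase hmem)
        have h2' : (F.erase a).min' he ≠ a := Finset.ne_of_mem_erase hmem
        omega
      have := ih _ hsub he (fun i hi => h1 i (Finset.mem_of_mem_erase hi))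
      have hsub2 : setProd U (F.erase a) ⊆ U a := by
        refine this.trans (U_antitone hone hchain ?_)
        omega
      calc U a * setProd U (F.erase a) ⊆ U a * U a :=
            Set.mul_subset_mul Subset.rfl hsub2
        _ ⊆ U (a - 1) := by
            have := hchain (a - 1)
            have h1a : 1 ≤ a := h1 a (ha ▸ F.min'_mem h)
            rwa [Nat.sub_add_cancel h1a] at this

lemma setProd_mono {F G : Finset ℕ} (hF : F.Nonempty) (hG : G.Nonempty)
    (h1F : ∀ i ∈ F, 1 ≤ i) (h1G : ∀ i ∈ G, 1 ≤ i) (h : qF F ≤ qF G) :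
    setProd U F ⊆ setProd U G := by
  induction F using Finset.strongInduction generalizing G with
  | _ F ih =>
    have hba : G.min' hG ≤ F.min' hF := min_le_of_qF_le hF hG h
    rcases eq_or_lt_of_le hba with heq | hlt
    · rw [setProd_nonempty U hF, setProd_nonempty U hG]
      refine Set.mul_subset_mul (by rw [heq]) ?_
      rcases (F.erase (F.min' hF)).eq_empty_or_nonempty with hFe | hFe
      · rw [hFe, setProd_empty]
        exact one_subset_setProd U hone _
      · have hq' : qF (F.erase (F.min' hF)) ≤ qF (G.erase (G.min' hG)) := by
          have e1 := qF_erase (F.min'_mem hF)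
          have e2 := qF_erase (G.min'_mem hG)
          have e3 : (2:ℝ)⁻¹ ^ (G.min' hG) = (2:ℝ)⁻¹ ^ (F.min' hF) := by rw [heq]
          linarith
        rcases (G.erase (G.min' hG)).eq_empty_or_nonempty with hGe | hGe
        · exfalso
          rw [hGe] at hq'
          have h0 : qF (∅ : Finset ℕ) = 0 := by simp [qF]
          rw [h0] at hq'
          exact absurd hq' (not_le.2 (qF_pos hFe))
        · exact ih _ (Finset.erase_ssubset (F.min'_mem hF)) hFe hGe
            (fun i hi => h1F i (Finset.mem_of_mem_erase hi))
            (fun i hi => h1G i (Finset.mem_of_mem_erase hi)) hq'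
    · have hsub1 : setProd U F ⊆ U (F.min' hF - 1) := setProd_subset_U hone hchain hF h1F
      have hsub2 : U (F.min' hF - 1) ⊆ U (G.min' hG) := U_antitone hone hchain (by omega)
      rw [setProd_nonempty U hG]
      intro z hz
      exact ⟨z, hsub2 (hsub1 hz), 1, one_mem_setProd U hone _, mul_one z⟩

omit hone hchain in
lemma setProd_insert {F : Finset ℕ} {n : ℕ} (hF : F.Nonempty) (hn : ∀ i ∈ F, i < n) :
    setProd U (insert n F) = setProd U F * U n := by
  induction F using Finset.strongInduction with
  | _ F ih =>
    have hins : (insert n F).Nonempty := Finset.insert_nonempty _ _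
    have hmin : (insert n F).min' hins = F.min' hF := by
      apply le_antisymm
      · exact Finset.min'_le _ _ (Finset.mem_insert_of_mem (F.min'_mem hF))
      · apply Finset.le_min'
        intro y hy
        rcases Finset.mem_insert.1 hy with rfl | hy
        · exact le_of_lt (hn _ (F.min'_mem hF))
        · exact F.min'_le _ hy
    have herase : (insert n F).erase (F.min' hF) = insert n (F.erase (F.min' hF)) := by
      rw [Finset.erase_insert_of_ne]
      exact fun hna => (lt_irrefl n (hna ▸ hn _ (F.min'_mem hF))).elim
    rw [setProd_nonempty U hins, hmin, herase, setProd_nonempty U hF]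
    rcases (F.erase (F.min' hF)).eq_empty_or_nonempty with he | he
    · have h1 : setProd U (insert n (∅ : Finset ℕ)) = U n := by
        rw [setProd_nonempty U (Finset.insert_nonempty _ _)]
        simp [setProd_empty]
      rw [he, h1, setProd_empty, mul_one]
    · rw [ih _ (Finset.erase_ssubset (F.min'_mem hF)) he
        (fun i hi => hn i (Finset.mem_of_mem_erase hi)), mul_assoc]

end SemiregMonoidCR

namespace SemiregMonoidCR

lemma qF_shift (G : Finset ℕ) :
    qF (G.image (· + 1)) = (2:ℝ)⁻¹ * qF G := by
  rw [qF, Finset.sum_image (by intro a _ b _ h; simpa using h)]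
  rw [qF, Finset.mul_sum]
  refine Finset.sum_congr rfl fun i _ => ?_
  rw [pow_succ]; ring

lemma exists_rep : ∀ n k : ℕ, 1 ≤ k → k < 2 ^ n →
    ∃ G : Finset ℕ, G.Nonempty ∧ (∀ i ∈ G, 1 ≤ i) ∧ qF G = (k : ℝ) * (2:ℝ)⁻¹ ^ n := by
  intro n
  induction n with
  | zero => intro k h1 h2; omega
  | succ n ih =>
    intro k h1 h2
    by_cases hk : k < 2 ^ n
    · obtain ⟨G, hGne, hG1, hGq⟩ := ih k h1 hk
      refine ⟨G.image (· + 1), hGne.image _, ?_, ?_⟩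
      · intro i hi
        obtain ⟨j, _, rfl⟩ := Finset.mem_image.1 hi
        omega
      · rw [qF_shift, hGq, pow_succ]; ring
    · push_neg at hk
      set k' := k - 2 ^ n with hk'def
      have hkk : k = 2 ^ n + k' := by omega
      have hk2 : k' < 2 ^ n := by omega
      have hhalf : ((2:ℝ) ^ n) * (2:ℝ)⁻¹ ^ (n + 1) = (2:ℝ)⁻¹ := by
        rw [pow_succ, ← mul_assoc, ← mul_pow]; norm_num
      rcases Nat.eq_zero_or_pos k' with h0 | hpos
      · refine ⟨{1}, Finset.singleton_nonempty _, by simp, ?_⟩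
        have : qF {1} = (2:ℝ)⁻¹ := by simp [qF]
        rw [this, hkk, h0]
        push_cast
        rw [add_zero, hhalf]
      · obtain ⟨G, hGne, hG1, hGq⟩ := ih k' hpos hk2
        have hnotmem : 1 ∉ G.image (· + 1) := by
          intro h
          obtain ⟨j, hj, hj2⟩ := Finset.mem_image.1 h
          have := hG1 j hj
          omega
        refine ⟨insert 1 (G.image (· + 1)), Finset.insert_nonempty _ _, ?_, ?_⟩
        · intro i hi
          rcases Finset.mem_insert.1 hi with rfl | hi
          · exact le_refl 1
          · obtain ⟨j, _, rfl⟩ := Finset.mem_image.1 hi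
            omega
        · rw [qF_insert hnotmem, qF_shift, hGq, hkk]
          push_cast
          rw [pow_one, add_mul, hhalf, pow_succ]
          ring

lemma exists_qF_between {c d : ℝ} (hc : 0 ≤ c) (hcd : c < d) (hd : d ≤ 1) :
    ∃ G : Finset ℕ, G.Nonempty ∧ (∀ i ∈ G, 1 ≤ i) ∧ c < qF G ∧ qF G < d := by
  obtain ⟨n, hn⟩ := exists_pow_lt_of_lt_one (sub_pos.2 hcd) (by norm_num : (2:ℝ)⁻¹ < 1)
  have h2pos : (0:ℝ) < 2 ^ n := by positivity
  have hhalfpos : (0:ℝ) < (2:ℝ)⁻¹ ^ n := by positivity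
  have hone : (2:ℝ) ^ n * (2:ℝ)⁻¹ ^ n = 1 := by rw [← mul_pow]; norm_num
  set k := Nat.floor (c * 2 ^ n) + 1 with hkdef
  have hfl : (Nat.floor (c * 2 ^ n) : ℝ) ≤ c * 2 ^ n := Nat.floor_le (by positivity)
  have hfl2 : c * 2 ^ n < Nat.floor (c * 2 ^ n) + 1 := Nat.lt_floor_add_one _
  have hcq : c < (k : ℝ) * (2:ℝ)⁻¹ ^ n := by
    have h1 : c * 2 ^ n < (k : ℝ) := by rw [hkdef]; push_cast; linarith
    calc c = c * 2 ^ n * (2:ℝ)⁻¹ ^ n := by rw [mul_assoc, hone, mul_one]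
      _ < (k : ℝ) * (2:ℝ)⁻¹ ^ n := by
          exact mul_lt_mul_of_pos_right h1 hhalfpos
  have hqd : (k : ℝ) * (2:ℝ)⁻¹ ^ n < d := by
    have h1 : (k : ℝ) ≤ c * 2 ^ n + 1 := by rw [hkdef]; push_cast; linarith
    have h2 : (k : ℝ) * (2:ℝ)⁻¹ ^ n ≤ (c * 2 ^ n + 1) * (2:ℝ)⁻¹ ^ n :=
      mul_le_mul_of_nonneg_right h1 hhalfpos.le
    have h3 : (c * 2 ^ n + 1) * (2:ℝ)⁻¹ ^ n = c + (2:ℝ)⁻¹ ^ n := by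
      rw [add_mul, one_mul, mul_assoc, hone, mul_one]
    linarith
  have hk1 : 1 ≤ k := by omega
  have hk2 : k < 2 ^ n := by
    have h1 : (k : ℝ) * (2:ℝ)⁻¹ ^ n < 1 := lt_of_lt_of_le hqd hd
    have h2 : (k : ℝ) < 2 ^ n := by
      have h4 := mul_lt_mul_of_pos_right h1 h2pos
      rw [one_mul, mul_assoc, mul_comm ((2:ℝ)⁻¹ ^ n) _, hone, mul_one] at h4
      exact h4
    exact_mod_cast h2
  obtain ⟨G, hGne, hG1, hGq⟩ := exists_rep n k hk1 hk2
  exact ⟨G, hGne, hG1, by rw [hGq]; exact hcq, by rw [hGq]; exact hqd⟩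

/-! ### Topological lemmas -/

variable {T : Type*} [Monoid T] [TopologicalSpace T] [ContinuousMul T]

lemma isOpen_mul_right (hshift : ∀ a b : T, IsOpenMap fun x : T => a * x * b)
    (A : Set T) {V : Set T} (hV : IsOpen V) : IsOpen (A * V) := by
  have h : A * V = ⋃ a ∈ A, (fun x : T => a * x * 1) '' V := by
    ext z
    simp only [Set.mem_mul, Set.mem_iUnion, Set.mem_image, mul_one]
    tauto
  rw [h]
  exact isOpen_biUnion fun a _ => hshift a 1 V hV

lemma closure_mul_subset (A V : Set T) : closure A * V ⊆ closure (A * V) := by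
  rintro z ⟨a, ha, v, hv, rfl⟩
  have hc : Continuous fun y : T => y * v := continuous_mul_right v
  have him : (fun y : T => y * v) '' closure A ⊆ closure ((fun y : T => y * v) '' A) :=
    image_closure_subset_closure_image hc
  have h2 : (fun y : T => y * v) '' A ⊆ A * V := by
    rintro w ⟨b, hb, rfl⟩; exact ⟨b, hb, v, hv, rfl⟩
  exact closure_mono h2 (him ⟨a, ha, rfl⟩)

lemma subset_mul_of_one_mem {A V : Set T} (h1 : (1:T) ∈ V) : A ⊆ A * V :=
  fun a ha => ⟨a, ha, 1, h1, mul_one a⟩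

lemma closure_subset_interior_closure_mul
    (hshift : ∀ a b : T, IsOpenMap fun x : T => a * x * b)
    {V : Set T} (hV : IsOpen V) (h1 : (1:T) ∈ V) (A : Set T) :
    closure A ⊆ interior (closure (A * V)) :=
  (subset_mul_of_one_mem h1).trans
    (interior_maximal (closure_mul_subset A V) (isOpen_mul_right hshift _ hV))

end SemiregMonoidCR

open SemiregMonoidCR Set Pointwise

set_option maxHeartbeats 3200000 in
/-- Every semiregular topological monoid with open shifts is
completely regular. -/
theorem completelyRegular_of_semiregular_monoid {S : Type*} [Monoid S]
    [TopologicalSpace S] [ContinuousMul S]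
    (hshift : ∀ a b : S, IsOpenMap fun x : S => a * x * b)
    (hs : ∀ x : S, ∀ O ∈ 𝓝 x, ∃ U ∈ 𝓝 x, interior (closure U) ⊆ O) :
    CompletelyRegularSpace S := by
  constructor
  intro x K hK hxK
  have hO : Kᶜ ∈ 𝓝 x := hK.isOpen_compl.mem_nhds hxK
  obtain ⟨V, hVnhds, hVsub⟩ := hs x Kᶜ hO
  have hxV : x ∈ interior V := mem_interior_iff_mem_nhds.2 hVnhds
  set U0 : Set S := (fun u : S => x * u) ⁻¹' (interior V) with hU0def
  have hU0open : IsOpen U0 := isOpen_interior.preimage (continuous_mul_left x)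
  have hU0one : (1:S) ∈ U0 := by
    show x * 1 ∈ interior V
    rwa [mul_one]
  -- the chain of neighborhoods of the unit
  have hex : ∃ U : ℕ → Set S, U 0 = U0 ∧ (∀ n, IsOpen (U n)) ∧ (∀ n, (1:S) ∈ U n) ∧
      ∀ n, U (n+1) * U (n+1) ⊆ U n := by
    have hrec : ∀ W : Set S, IsOpen W → (1:S) ∈ W →
        ∃ W' : Set S, IsOpen W' ∧ (1:S) ∈ W' ∧ W' * W' ⊆ W :=
      fun W hWo hW1 => exists_open_nhds_one_mul_subset (hWo.mem_nhds hW1)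
    let step : {W : Set S // IsOpen W ∧ (1:S) ∈ W} → {W : Set S // IsOpen W ∧ (1:S) ∈ W} :=
      fun W => ⟨(hrec W.1 W.2.1 W.2.2).choose, (hrec W.1 W.2.1 W.2.2).choose_spec.1,
        (hrec W.1 W.2.1 W.2.2).choose_spec.2.1⟩
    let Tseq : ℕ → {W : Set S // IsOpen W ∧ (1:S) ∈ W} :=
      fun n => step^[n] ⟨U0, hU0open, hU0one⟩
    refine ⟨fun n => (Tseq n).1, rfl, fun n => (Tseq n).2.1, fun n => (Tseq n).2.2, ?_⟩
    intro n
    have hT : Tseq (n+1) = step (Tseq n) := Function.iterate_succ_apply' step n _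
    have h1 : (Tseq (n+1)).1 = (step (Tseq n)).1 := congrArg Subtype.val hT
    show (Tseq (n+1)).1 * (Tseq (n+1)).1 ⊆ (Tseq n).1
    rw [h1]
    exact (hrec (Tseq n).1 (Tseq n).2.1 (Tseq n).2.2).choose_spec.2.2
  obtain ⟨U, hU0eq, hUopen, hUone, hUchain⟩ := hex
  -- basic facts about the sets {x} * setProd U F
  have fact_mem : ∀ F : Finset ℕ, x ∈ {x} * setProd U F :=
    fun F => ⟨x, rfl, 1, one_mem_setProd U hUone F, mul_one x⟩
  have fact_sub0 : ∀ F : Finset ℕ, F.Nonempty → (∀ i ∈ F, 1 ≤ i) →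
      {x} * setProd U F ⊆ interior V := by
    intro F hF h1F
    have h1 : setProd U F ⊆ U 0 :=
      (setProd_subset_U hUone hUchain hF h1F).trans
        (U_antitone hUone hUchain (Nat.zero_le _))
    have h2 : setProd U F ⊆ U0 := hU0eq ▸ h1
    rintro z ⟨a, ha, u, hu, rfl⟩
    rw [Set.mem_singleton_iff] at ha
    subst ha
    exact h2 hu
  have fact_thicken : ∀ (F : Finset ℕ) (n : ℕ), F.Nonempty → (∀ i ∈ F, i < n) →
      closure ({x} * setProd U F) ⊆
        interior (closure ({x} * setProd U (insert n F))) := by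
    intro F n hF hn
    have h1 := closure_subset_interior_closure_mul hshift (hUopen n) (hUone n)
      ({x} * setProd U F)
    rwa [mul_assoc, ← setProd_insert (U := U) hF hn] at h1
  have fact_inside : ∀ F : Finset ℕ, F.Nonempty → (∀ i ∈ F, 1 ≤ i) →
      closure ({x} * setProd U F) ⊆ Kᶜ := by
    intro F hF h1F
    set n := F.max' hF + 1 with hndef
    have hn : ∀ i ∈ F, i < n := fun i hi => by
      have := F.le_max' i hi; omega
    have hgood : ∀ i ∈ insert n F, 1 ≤ i := by
      intro i hi
      rcases Finset.mem_insert.1 hi with rfl | hi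
      · omega
      · exact h1F i hi
    refine (fact_thicken F n hF hn).trans ?_
    have h2 : {x} * setProd U (insert n F) ⊆ V :=
      (fact_sub0 _ (Finset.insert_nonempty _ _) hgood).trans interior_subset
    exact (interior_mono (closure_mono h2)).trans hVsub
  -- the function
  set A : S → Set ℝ := fun y => insert (1:ℝ)
    {r : ℝ | ∃ F : Finset ℕ, F.Nonempty ∧ (∀ i ∈ F, 1 ≤ i) ∧
      y ∈ closure ({x} * setProd U F) ∧ qF F = r} with hAdef
  have hAne : ∀ y, (A y).Nonempty := fun y => ⟨1, Set.mem_insert _ _⟩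
  have hAlb : ∀ y, ∀ r ∈ A y, (0:ℝ) ≤ r := by
    intro y r hr
    rcases Set.mem_insert_iff.1 hr with rfl | ⟨F, _, _, _, rfl⟩
    · norm_num
    · exact qF_nonneg F
  have hAbdd : ∀ y, BddBelow (A y) := fun y => ⟨0, fun r hr => hAlb y r hr⟩
  set f : S → ℝ := fun y => sInf (A y) with hfdef
  have hf0 : ∀ y, 0 ≤ f y := fun y => le_csInf (hAne y) (hAlb y)
  have hf1 : ∀ y, f y ≤ 1 := fun y => csInf_le (hAbdd y) (Set.mem_insert _ _)
  -- f x = 0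
  have hfx : f x = 0 := by
    refine le_antisymm ?_ (hf0 x)
    by_contra hc
    push_neg at hc
    obtain ⟨n, hn⟩ := exists_pow_lt_of_lt_one hc (by norm_num : (2:ℝ)⁻¹ < 1)
    have hmem : (2:ℝ)⁻¹ ^ (n+1) ∈ A x := by
      refine Set.mem_insert_of_mem _ ⟨{n+1}, Finset.singleton_nonempty _, ?_, ?_, ?_⟩
      · intro i hi; rw [Finset.mem_singleton] at hi; omega
      · exact subset_closure (fact_mem _)
      · simp [qF]
    have h1 : f x ≤ (2:ℝ)⁻¹ ^ (n+1) := csInf_le (hAbdd x) hmem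
    have h2 : (2:ℝ)⁻¹ ^ (n+1) ≤ (2:ℝ)⁻¹ ^ n :=
      pow_le_pow_of_le_one (by norm_num) (by norm_num) (by omega)
    linarith
  -- f = 1 on K
  have hfK : ∀ y ∈ K, f y = 1 := by
    intro y hy
    have hA : A y = {1} := by
      apply Set.Subset.antisymm
      · intro r hr
        rcases Set.mem_insert_iff.1 hr with rfl | ⟨F, hF, h1F, hcl, rfl⟩
        · exact Set.mem_singleton _
        · exact absurd hy (fact_inside F hF h1F hcl)
      · intro r hr
        rw [Set.mem_singleton_iff] at hr
        subst hr
        exact Set.mem_insert _ _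
    rw [hfdef]
    simp only [hA]
    exact csInf_singleton 1
  -- continuity
  have hcont : Continuous f := by
    rw [continuous_iff_continuousAt]
    intro y
    rw [ContinuousAt, Metric.tendsto_nhds]
    intro ε hε
    -- upper semicontinuity part
    have hUSC : ∃ N ∈ 𝓝 y, ∀ z ∈ N, f z < f y + ε := by
      obtain ⟨s, hsmem, hslt⟩ := Real.lt_sInf_add_pos (hAne y) (half_pos hε)
      rcases Set.mem_insert_iff.1 hsmem with rfl | ⟨F, hF, h1F, hcl, rfl⟩
      · refine ⟨Set.univ, Filter.univ_mem, fun z _ => ?_⟩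
        have := hf1 z
        have : f z ≤ 1 := this
        linarith
      · obtain ⟨m, hm⟩ := exists_pow_lt_of_lt_one (half_pos hε)
          (by norm_num : (2:ℝ)⁻¹ < 1)
        set n := max (F.max' hF + 1) m with hndef
        have hnF : ∀ i ∈ F, i < n := fun i hi => by
          have := F.le_max' i hi
          have := le_max_left (F.max' hF + 1) m
          omega
        have hnm : (2:ℝ)⁻¹ ^ n ≤ (2:ℝ)⁻¹ ^ m :=
          pow_le_pow_of_le_one (by norm_num) (by norm_num) (le_max_right _ _)
        have hgood : ∀ i ∈ insert n F, 1 ≤ i := by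
          intro i hi
          rcases Finset.mem_insert.1 hi with rfl | hi
          · have h1 : 1 ≤ F.max' hF := h1F _ (F.max'_mem hF)
            have := le_max_left (F.max' hF + 1) m
            omega
          · exact h1F i hi
        have hnotF : n ∉ F := fun hmem => lt_irrefl n (hnF n hmem)
        refine ⟨interior (closure ({x} * setProd U (insert n F))),
          (isOpen_interior.mem_nhds (fact_thicken F n hF hnF hcl)), fun z hz => ?_⟩
        have hzc : z ∈ closure ({x} * setProd U (insert n F)) := interior_subset hz
        have hmem2 : qF (insert n F) ∈ A z :=
          Set.mem_insert_of_mem _ ⟨insert n F, Finset.insert_nonempty _ _, hgood, hzc, rfl⟩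
        have h1 : f z ≤ qF (insert n F) := csInf_le (hAbdd z) hmem2
        rw [qF_insert hnotF] at h1
        linarith
    -- lower semicontinuity part
    have hLSC : ∃ N ∈ 𝓝 y, ∀ z ∈ N, f y - ε < f z := by
      rcases eq_or_lt_of_le (hf0 y) with h0 | hpos
      · exact ⟨Set.univ, Filter.univ_mem, fun z _ => by
          have := hf0 z; linarith⟩
      · obtain ⟨G, hGne, hG1, hGc, hGd⟩ :=
          exists_qF_between (c := max (f y - ε) 0) (d := f y) (le_max_right _ _)
            (max_lt (by linarith) hpos) (hf1 y)
        have hynot : y ∉ closure ({x} * setProd U G) := by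
          intro hyc
          have : qF G ∈ A y := Set.mem_insert_of_mem _ ⟨G, hGne, hG1, hyc, rfl⟩
          have := csInf_le (hAbdd y) this
          linarith
        have hNopen : IsOpen (closure ({x} * setProd U G))ᶜ := isClosed_closure.isOpen_compl
        refine ⟨(closure ({x} * setProd U G))ᶜ, hNopen.mem_nhds (Set.mem_compl hynot),
          fun z hz => ?_⟩
        have hlb : ∀ r ∈ A z, qF G ≤ r := by
          intro r hr
          rcases Set.mem_insert_iff.1 hr with rfl | ⟨F', hF', h1F', hcl', rfl⟩
          · linarith [hf1 y]
          · by_contra hcon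
            push_neg at hcon
            have hsub : setProd U F' ⊆ setProd U G :=
              setProd_mono hUone hUchain hF' hGne h1F' hG1 (le_of_lt hcon)
            have : z ∈ closure ({x} * setProd U G) :=
              closure_mono (Set.mul_subset_mul Subset.rfl hsub) hcl'
            exact hz this
        have h2 : qF G ≤ f z := le_csInf (hAne z) hlb
        have h3 : f y - ε ≤ max (f y - ε) 0 := le_max_left _ _
        linarith
    obtain ⟨N1, hN1, hN1p⟩ := hUSC
    obtain ⟨N2, hN2, hN2p⟩ := hLSC
    filter_upwards [hN1, hN2] with z h1 h2
    rw [Real.dist_eq, abs_sub_lt_iff]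
    constructor <;> [linarith [hN1p z h1]; linarith [hN2p z h2]]
  -- package into the unit interval
  refine ⟨fun y => ⟨f y, hf0 y, hf1 y⟩, ?_, ?_, ?_⟩
  · exact Continuous.subtype_mk hcont _
  · exact Subtype.ext hfx
  · intro y hy
    exact Subtype.ext (by simpa using hfK y hy)
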